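/- Let k ≥ 1, c ≥ 1 be integers and let a₀, a₁, a₂, a₃ ∈ 𝔽_{2^k} with a₀ ≠ 0. Define g : 𝔽_{2^k} × 𝔽_{2^k} → 𝔽₂ by g(x, y) = Tr(a₀·x·y + a₁·x + a₂·y + a₃). Viewing 𝔽_{2^k} × 𝔽_{2^k} as an 𝔽₂-vector space of dimension 2k, g is an affine extractor for dimension k + c with bias at most 2^{−c}. In particular, g is an affine disperser for dimension k + 1. -/

import Mathlib

open scoped Classical

/-- The bias of a Boolean function `f` restricted to a (nonempty) subset `S` of its
finite domain: `|(1/|S|) ∑_{x ∈ S} (-1)^{f(x)}|`. -/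
noncomputable def biasSet {E : Type*} [Fintype E] (f : E → ZMod 2) (S : Set E) : ℝ :=
  |∑ x ∈ S.toFinset, (-1 : ℝ) ^ (f x).val| / (S.toFinset.card : ℝ)

namespace TraceExtractorAux

open Finset

lemma biasSet_eq {E : Type*} [Fintype E] (f : E → ZMod 2) (S : Set E) (T : Finset E)
    (hST : ∀ x, x ∈ T ↔ x ∈ S) :
    biasSet f S = |∑ x ∈ T, (-1 : ℝ) ^ (f x).val| / (T.card : ℝ) := by
  have h : S.toFinset = T := by
    ext x
    rw [Set.mem_toFinset, hST]
  rw [biasSet, h]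

noncomputable def e2 (a : ZMod 2) : ℝ := (-1 : ℝ) ^ a.val

lemma e2_def (a : ZMod 2) : (-1 : ℝ) ^ a.val = e2 a := rfl

lemma zmod2_cases (a : ZMod 2) : a = 0 ∨ a = 1 := by
  revert a; decide

lemma e2_zero : e2 0 = 1 := by simp [e2]

lemma e2_one : e2 1 = -1 := by
  norm_num [e2, show (1 : ZMod 2).val = 1 from rfl]

lemma e2_add (a b : ZMod 2) : e2 (a + b) = e2 a * e2 b := by
  rcases zmod2_cases a with h | h <;> rcases zmod2_cases b with h' | h' <;>
    subst h <;> subst h' <;>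
    simp [e2_zero, e2_one, show (1 + 1 : ZMod 2) = 0 by decide]

lemma e2_sq (a : ZMod 2) : e2 a * e2 a = 1 := by
  rcases zmod2_cases a with h | h <;> subst h <;> simp [e2_zero, e2_one]

lemma e2_abs (a : ZMod 2) : |e2 a| = 1 := by
  rcases zmod2_cases a with h | h <;> subst h <;> simp [e2_zero, e2_one]

lemma e2_le_one (a : ZMod 2) : e2 a ≤ 1 := by
  rcases zmod2_cases a with h | h <;> subst h
  · rw [e2_zero]
  · rw [e2_one]; norm_num

lemma self_add_self {M : Type*} [AddCommMonoid M] [Module (ZMod 2) M] (u : M) :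
    u + u = 0 := by
  have h := two_smul (ZMod 2) u
  rw [show (2 : ZMod 2) = 0 by decide, zero_smul] at h
  exact h.symm

/-- Character sum over a subgroup vanishes for a nontrivial additive character. -/
lemma sum_e2_eq_zero {M : Type*} [AddCommGroup M] [Module (ZMod 2) M] [Fintype M]
    (V : Submodule (ZMod 2) M) (L : M → ZMod 2)
    (hadd : ∀ x y, L (x + y) = L x + L y)
    (v0 : M) (hv0 : v0 ∈ V) (h1 : L v0 ≠ 0) :
    ∑ v ∈ (V : Set M).toFinset, e2 (L v) = 0 := by
  have hL1 : L v0 = 1 := by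
    rcases zmod2_cases (L v0) with h | h
    · exact absurd h h1
    · exact h
  have key : ∑ v ∈ (V : Set M).toFinset, e2 (L v)
      = ∑ v ∈ (V : Set M).toFinset, e2 (L (v + v0)) := by
    refine Finset.sum_nbij' (fun v => v + v0) (fun v => v + v0) ?_ ?_ ?_ ?_ ?_
    · intro a ha
      rw [Set.mem_toFinset] at ha ⊢
      exact V.add_mem ha hv0
    · intro a ha
      rw [Set.mem_toFinset] at ha ⊢
      exact V.add_mem ha hv0
    · intro a _
      show a + v0 + v0 = a
      rw [add_assoc, self_add_self, add_zero]
    · intro a _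
      show a + v0 + v0 = a
      rw [add_assoc, self_add_self, add_zero]
    · intro a _
      show e2 (L a) = e2 (L (a + v0 + v0))
      rw [add_assoc, self_add_self, add_zero]
  have hneg : ∀ v : M, e2 (L (v + v0)) = -e2 (L v) := by
    intro v
    rw [hadd, hL1, e2_add, e2_one]
    ring
  have hS : ∑ v ∈ (V : Set M).toFinset, e2 (L v)
      = -∑ v ∈ (V : Set M).toFinset, e2 (L v) := by
    nth_rewrite 1 [key]
    simp only [hneg]
    rw [Finset.sum_neg_distrib]
  linarith

/-- Counting the kernel of the bilinear form restricted to `V`. -/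
lemma ker_count {k : ℕ} {F : Type*} [Field F] [Fintype F] [Algebra (ZMod 2) F]
    (hF : Fintype.card F = 2 ^ k) (a0 : F) (ha0 : a0 ≠ 0)
    (V : Submodule (ZMod 2) (F × F)) :
    ∃ m : ℕ, m + Module.finrank (ZMod 2) V = 2 * k ∧
      {u : F × F | ∀ v ∈ V,
        Algebra.trace (ZMod 2) F (a0 * (v.1 * u.2 + v.2 * u.1)) = 0}.toFinset.card = 2 ^ m := by
  haveI : Module.Finite (ZMod 2) F := Module.Finite.of_finite
  haveI : Algebra.IsAlgebraic (ZMod 2) F := Algebra.IsAlgebraic.of_finite (ZMod 2) F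
  haveI : Algebra.IsSeparable (ZMod 2) F := inferInstance
  have hrF : Module.finrank (ZMod 2) F = k := by
    have h := Module.card_eq_pow_finrank (K := ZMod 2) (V := F)
    rw [ZMod.card, hF] at h
    exact (Nat.pow_right_injective le_rfl h.symm)
  have hrFF : Module.finrank (ZMod 2) (F × F) = 2 * k := by
    rw [Module.finrank_prod, hrF]; ring
  set t := Algebra.trace (ZMod 2) F with ht
  -- the linear map u ↦ (v ↦ Tr(a0 (v₁u₂ + v₂u₁)))
  let φ0 : F × F → (F × F) →+ ZMod 2 := fun u =>
    { toFun := fun v => t (a0 * (v.1 * u.2 + v.2 * u.1))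
      map_zero' := by simp
      map_add' := fun v w => by
        rw [← map_add]
        congr 1
        simp only [Prod.fst_add, Prod.snd_add]
        ring }
  let φ : (F × F) →ₗ[ZMod 2] Module.Dual (ZMod 2) (F × F) :=
    AddMonoidHom.toZModLinearMap 2
      { toFun := fun u => ((φ0 u).toZModLinearMap 2)
        map_zero' := by
          refine LinearMap.ext fun v => ?_
          show t (a0 * (v.1 * (0 : F × F).2 + v.2 * (0 : F × F).1)) = 0
          simp
        map_add' := fun u w => by
          refine LinearMap.ext fun v => ?_
          show t (a0 * (v.1 * (u + w).2 + v.2 * (u + w).1))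
            = t (a0 * (v.1 * u.2 + v.2 * u.1)) + t (a0 * (v.1 * w.2 + v.2 * w.1))
          rw [← map_add]
          congr 1
          simp only [Prod.fst_add, Prod.snd_add]
          ring }
  have hφ_apply : ∀ u v : F × F, φ u v = t (a0 * (v.1 * u.2 + v.2 * u.1)) := fun u v => rfl
  have hnd := traceForm_nondegenerate (ZMod 2) F
  have hφinj : Function.Injective φ := by
    refine (injective_iff_map_eq_zero φ).mpr ?_
    intro u hu
    have h2 : u.2 = 0 := by
      have ha : a0 * u.2 = 0 := by
        refine hnd.1 _ (fun x => ?_)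
        have hx := LinearMap.ext_iff.mp hu (x, 0)
        rw [hφ_apply] at hx
        rw [Algebra.traceForm_apply]
        rw [show a0 * u.2 * x = a0 * ((x, (0:F)).1 * u.2 + (x, (0:F)).2 * u.1) by ring]
        exact hx
      exact (mul_eq_zero.mp ha).resolve_left ha0
    have h1 : u.1 = 0 := by
      have ha : a0 * u.1 = 0 := by
        refine hnd.1 _ (fun x => ?_)
        have hx := LinearMap.ext_iff.mp hu ((0 : F), x)
        rw [hφ_apply] at hx
        rw [Algebra.traceForm_apply]
        rw [show a0 * u.1 * x = a0 * (((0:F), x).1 * u.2 + ((0:F), x).2 * u.1) by ring]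
        exact hx
      exact (mul_eq_zero.mp ha).resolve_left ha0
    exact Prod.ext h1 h2
  have hφsurj : Function.Surjective φ :=
    (LinearMap.injective_iff_surjective_of_finrank_eq_finrank
      (by rw [Subspace.dual_finrank_eq])).mp hφinj
  set ψ := V.dualRestrict.comp φ with hψ
  have hψsurj : Function.Surjective ψ :=
    (Subspace.dualRestrict_surjective (W := V)).comp hφsurj
  have hrank := LinearMap.finrank_range_add_finrank_ker ψ
  rw [LinearMap.range_eq_top.mpr hψsurj, finrank_top, Subspace.dual_finrank_eq, hrFF] at hrank
  refine ⟨Module.finrank (ZMod 2) (LinearMap.ker ψ), by omega, ?_⟩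
  have hKset : {u : F × F | ∀ v ∈ V, t (a0 * (v.1 * u.2 + v.2 * u.1)) = 0}
      = (LinearMap.ker ψ : Set (F × F)) := by
    ext u
    simp only [Set.mem_setOf_eq, SetLike.mem_coe, LinearMap.mem_ker]
    constructor
    · intro h
      apply LinearMap.ext
      rintro ⟨v, hv⟩
      show V.dualRestrict (φ u) ⟨v, hv⟩ = 0
      rw [Submodule.dualRestrict_apply, hφ_apply]
      exact h v hv
    · intro h v hv
      have h2 := LinearMap.ext_iff.mp h ⟨v, hv⟩
      rw [hψ] at h2
      simp only [LinearMap.comp_apply, Submodule.dualRestrict_apply] at h2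
      rw [hφ_apply] at h2
      exact h2
  rw [Set.toFinset_congr hKset, Set.toFinset_card]
  have hcardeq : Fintype.card ((LinearMap.ker ψ : Set (F × F))) =
      Fintype.card (LinearMap.ker ψ) :=
    Fintype.card_congr ⟨fun x => ⟨x.1, x.2⟩, fun x => ⟨x.1, x.2⟩,
      fun _ => rfl, fun _ => rfl⟩
  rw [hcardeq]
  have h := Module.card_eq_pow_finrank (K := ZMod 2) (V := LinearMap.ker ψ)
  rw [ZMod.card] at h
  exact h

lemma e2_mul_le_one (a b : ZMod 2) : e2 a * e2 b ≤ 1 := by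
  rw [← e2_add]; exact e2_le_one _

lemma bias_bound {k c : ℕ} {F : Type*} [Field F] [Fintype F] [Algebra (ZMod 2) F]
    (hF : Fintype.card F = 2 ^ k)
    (a0 a1 a2 a3 : F) (ha0 : a0 ≠ 0)
    (g : F × F → ZMod 2)
    (hg : ∀ x y : F,
      g (x, y) = Algebra.trace (ZMod 2) F (a0 * x * y + a1 * x + a2 * y + a3))
    (V : Submodule (ZMod 2) (F × F)) (b : F × F)
    (hV : k + c ≤ Module.finrank (ZMod 2) V) :
    biasSet g ((fun v => v + b) '' (V : Set (F × F))) ≤ (2 : ℝ)⁻¹ ^ c := by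
  haveI : Module.Finite (ZMod 2) F := Module.Finite.of_finite
  set d := Module.finrank (ZMod 2) V with hd
  let B2 : F × F → F × F → ZMod 2 :=
    fun s u => Algebra.trace (ZMod 2) F (a0 * (s.1 * u.2 + s.2 * u.1))
  have hB2 : ∀ s u : F × F,
      B2 s u = Algebra.trace (ZMod 2) F (a0 * (s.1 * u.2 + s.2 * u.1)) := fun _ _ => rfl
  let q : F × F → ZMod 2 :=
    fun u => Algebra.trace (ZMod 2) F (a0 * u.1 * u.2 + a1 * u.1 + a2 * u.2)
  have hq : ∀ u : F × F,
      q u = Algebra.trace (ZMod 2) F (a0 * u.1 * u.2 + a1 * u.1 + a2 * u.2) := fun _ => rfl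
  have hgs : ∀ s : F × F,
      g s = Algebra.trace (ZMod 2) F (a0 * s.1 * s.2 + a1 * s.1 + a2 * s.2 + a3) :=
    fun s => hg s.1 s.2
  have hkey : ∀ s u : F × F, g (s + u) = g s + B2 s u + q u := by
    intro s u
    rw [hgs, hgs, hB2, hq, ← map_add, ← map_add]
    congr 1
    simp only [Prod.fst_add, Prod.snd_add]
    ring
  have hB2add : ∀ s s' u : F × F, B2 (s + s') u = B2 s u + B2 s' u := by
    intro s s' u
    rw [hB2, hB2, hB2, ← map_add]
    congr 1
    simp only [Prod.fst_add, Prod.snd_add]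
    ring
  set Vf : Finset (F × F) := (V : Set (F × F)).toFinset with hVf
  have hmemVf : ∀ v : F × F, v ∈ Vf ↔ v ∈ V := fun v => Set.mem_toFinset
  set N := Vf.card with hN
  have hNpos : 0 < N := Finset.card_pos.mpr ⟨0, (hmemVf 0).mpr V.zero_mem⟩
  have hinj : Function.Injective (fun v : F × F => v + b) := add_left_injective b
  have hST : ∀ x, x ∈ Vf.image (fun v => v + b) ↔
      x ∈ (fun v => v + b) '' (V : Set (F × F)) := by
    intro x
    rw [Finset.mem_image]
    constructor
    · rintro ⟨v, hv, rfl⟩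
      exact ⟨v, (hmemVf v).mp hv, rfl⟩
    · rintro ⟨v, hv, rfl⟩
      exact ⟨v, (hmemVf v).mpr hv, rfl⟩
  rw [biasSet_eq g _ (Vf.image (fun v => v + b)) hST,
    Finset.card_image_of_injective _ hinj,
    Finset.sum_image (fun x _ y _ h => hinj h)]
  have hsumS : ∑ x ∈ Vf, (-1 : ℝ) ^ (g (x + b)).val = ∑ v ∈ Vf, e2 (g (v + b)) := by
    simp only [e2]
  rw [hsumS]
  set A := ∑ v ∈ Vf, e2 (g (v + b)) with hA
  obtain ⟨m, hm, hKcard⟩ := ker_count hF a0 ha0 V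
  set Ks := {u : F × F | ∀ v ∈ V,
    Algebra.trace (ZMod 2) F (a0 * (v.1 * u.2 + v.2 * u.1)) = 0}.toFinset with hKs
  -- the square of the character sum
  have hA2 : A ^ 2 ≤ (2 : ℝ) ^ m * N := by
    have step1 : A ^ 2 = ∑ v ∈ Vf, ∑ u ∈ Vf,
        e2 (B2 v u) * (e2 (B2 b u) * e2 (q u)) := by
      rw [sq, hA, Finset.sum_mul_sum]
      refine Finset.sum_congr rfl (fun v hv => ?_)
      have hvV : v ∈ V := (hmemVf v).mp hv
      refine Finset.sum_nbij' (fun w => v + w) (fun u => v + u) ?_ ?_ ?_ ?_ ?_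
      · intro a ha
        rw [hmemVf] at ha ⊢
        exact V.add_mem hvV ha
      · intro a ha
        rw [hmemVf] at ha ⊢
        exact V.add_mem hvV ha
      · intro a _
        show v + (v + a) = a
        rw [← add_assoc, self_add_self, zero_add]
      · intro a _
        show v + (v + a) = a
        rw [← add_assoc, self_add_self, zero_add]
      · intro w hw
        show e2 (g (v + b)) * e2 (g (w + b))
          = e2 (B2 v (v + w)) * (e2 (B2 b (v + w)) * e2 (q (v + w)))
        have hwb : w + b = (v + b) + (v + w) := by
          have h0 : v + b + (v + w) = v + v + (w + b) := by abel
          rw [h0, self_add_self, zero_add]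
        have hBsplit : B2 (v + b) (v + w) = B2 v (v + w) + B2 b (v + w) := hB2add v b (v + w)
        rw [hwb, hkey (v + b) (v + w), hBsplit]
        rw [show g (v + b) + (B2 v (v + w) + B2 b (v + w)) + q (v + w)
            = g (v + b) + ((B2 v (v + w) + B2 b (v + w)) + q (v + w)) by ring,
          e2_add, e2_add, e2_add]
        have hsq := e2_sq (g (v + b))
        linear_combination (e2 (B2 v (v + w)) * e2 (B2 b (v + w)) * e2 (q (v + w))) * hsq
    rw [step1, Finset.sum_comm]
    have step2 : ∀ u ∈ Vf, ∑ v ∈ Vf, e2 (B2 v u) * (e2 (B2 b u) * e2 (q u))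
        ≤ if u ∈ Ks then (N : ℝ) else 0 := by
      intro u hu
      rw [← Finset.sum_mul]
      by_cases hcase : u ∈ Ks
      · rw [if_pos hcase]
        rw [hKs, Set.mem_toFinset, Set.mem_setOf_eq] at hcase
        have hsum : ∑ v ∈ Vf, e2 (B2 v u) = (N : ℝ) := by
          have hone : ∀ v ∈ Vf, e2 (B2 v u) = 1 := fun v hv => by
            rw [hB2, hcase v ((hmemVf v).mp hv), e2_zero]
          rw [Finset.sum_congr rfl hone, Finset.sum_const, nsmul_eq_mul, mul_one, hN]
        rw [hsum]
        have h1 : e2 (B2 b u) * e2 (q u) ≤ 1 := e2_mul_le_one _ _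
        have hN0 : (0 : ℝ) ≤ (N : ℝ) := Nat.cast_nonneg N
        nlinarith
      · rw [if_neg hcase]
        rw [hKs, Set.mem_toFinset, Set.mem_setOf_eq] at hcase
        push_neg at hcase
        obtain ⟨v0, hv0, hv0ne⟩ := hcase
        have hvanish : ∑ v ∈ Vf, e2 (B2 v u) = 0 := by
          have := sum_e2_eq_zero V (fun v => B2 v u)
            (fun x y => hB2add x y u) v0 hv0 (by exact hv0ne)
          exact this
        rw [hvanish, zero_mul]
    calc ∑ u ∈ Vf, ∑ v ∈ Vf, e2 (B2 v u) * (e2 (B2 b u) * e2 (q u))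
        ≤ ∑ u ∈ Vf, if u ∈ Ks then (N : ℝ) else 0 := Finset.sum_le_sum step2
      _ = ∑ u ∈ Vf.filter (· ∈ Ks), (N : ℝ) := (Finset.sum_filter _ _).symm
      _ = ((Vf.filter (· ∈ Ks)).card : ℝ) * N := by
          rw [Finset.sum_const, nsmul_eq_mul]
      _ ≤ (Ks.card : ℝ) * N := by
          have hsub : Vf.filter (· ∈ Ks) ⊆ Ks := fun x hx => (Finset.mem_filter.mp hx).2
          have := Finset.card_le_card hsub
          have hN0 : (0 : ℝ) ≤ (N : ℝ) := Nat.cast_nonneg N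
          exact mul_le_mul_of_nonneg_right (by exact_mod_cast this) hN0
      _ = (2 : ℝ) ^ m * N := by rw [hKs] at hKcard ⊢; rw [hKcard]; push_cast; ring
  -- cardinality of V
  have hNval : N = 2 ^ d := by
    rw [hN, hVf, Set.toFinset_card]
    have hcc : Fintype.card ((V : Set (F × F))) = Fintype.card V :=
      Fintype.card_congr ⟨fun x => ⟨x.1, x.2⟩, fun x => ⟨x.1, x.2⟩,
        fun _ => rfl, fun _ => rfl⟩
    rw [hcc]
    have h := Module.card_eq_pow_finrank (K := ZMod 2) (V := V)
    rw [ZMod.card] at h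
    exact h
  -- final arithmetic
  have hNR : (0 : ℝ) < (N : ℝ) := by exact_mod_cast hNpos
  rw [div_le_iff₀ hNR]
  have hrhs0 : (0 : ℝ) ≤ (2 : ℝ)⁻¹ ^ c * N :=
    mul_nonneg (pow_nonneg (by norm_num) c) (Nat.cast_nonneg N)
  have hsq : |A| ^ 2 ≤ ((2 : ℝ)⁻¹ ^ c * N) ^ 2 := by
    rw [sq_abs]
    refine le_trans hA2 ?_
    have hcast : ((N : ℕ) : ℝ) = (2 : ℝ) ^ d := by
      rw [hNval]; push_cast; ring
    rw [hcast, mul_pow, ← pow_mul, ← pow_mul, inv_pow, inv_mul_eq_div,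
      le_div_iff₀ (by positivity), ← pow_add, ← pow_add]
    have hexp : m + d + c * 2 ≤ d * 2 := by omega
    exact pow_le_pow_right₀ one_le_two hexp
  exact (abs_le_of_sq_le_sq' hsq hrhs0).2

end TraceExtractorAux

theorem trace_affine_extractor {k c : ℕ} (hk : 1 ≤ k) (hc : 1 ≤ c)
    {F : Type*} [Field F] [Fintype F] [Algebra (ZMod 2) F]
    (hF : Fintype.card F = 2 ^ k)
    (a0 a1 a2 a3 : F) (ha0 : a0 ≠ 0)
    (g : F × F → ZMod 2)
    (hg : ∀ x y : F,
      g (x, y) = Algebra.trace (ZMod 2) F (a0 * x * y + a1 * x + a2 * y + a3)) :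
    (∀ (V : Submodule (ZMod 2) (F × F)) (b : F × F),
      k + c ≤ Module.finrank (ZMod 2) V →
        biasSet g ((fun v => v + b) '' (V : Set (F × F))) ≤ (2 : ℝ)⁻¹ ^ c) ∧
    (∀ (V : Submodule (ZMod 2) (F × F)) (b : F × F),
      k + 1 ≤ Module.finrank (ZMod 2) V →
        ∃ x ∈ (fun v => v + b) '' (V : Set (F × F)),
          ∃ y ∈ (fun v => v + b) '' (V : Set (F × F)), g x ≠ g y) := by
  constructor
  · intro V b hVb
    exact TraceExtractorAux.bias_bound hF a0 a1 a2 a3 ha0 g hg V b hVb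
  · intro V b hVb
    have h1 := TraceExtractorAux.bias_bound (c := 1) hF a0 a1 a2 a3 ha0 g hg V b hVb
    by_contra hcon
    push_neg at hcon
    set S := (fun v => v + b) '' (V : Set (F × F)) with hS
    have hbS : b ∈ S := ⟨0, V.zero_mem, by simp⟩
    have hST : ∀ x, x ∈ S.toFinset ↔ x ∈ S := fun x => Set.mem_toFinset
    have hcardpos : 0 < S.toFinset.card :=
      Finset.card_pos.mpr ⟨b, Set.mem_toFinset.mpr hbS⟩
    have hconst : ∀ x ∈ S.toFinset, (-1 : ℝ) ^ (g x).val = (-1 : ℝ) ^ (g b).val := by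
      intro x hx
      rw [Set.mem_toFinset] at hx
      rw [hcon x hx b hbS]
    have hbias : biasSet g S = 1 := by
      rw [TraceExtractorAux.biasSet_eq g S S.toFinset hST,
        Finset.sum_congr rfl hconst, Finset.sum_const, nsmul_eq_mul]
      rw [abs_mul, abs_pow, abs_neg, abs_one, one_pow, mul_one,
        abs_of_nonneg (Nat.cast_nonneg _),
        div_self (by exact_mod_cast hcardpos.ne')]
    rw [hbias] at h1
    norm_num at h1
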